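/- Let σ : S → A be a pre-strategy and let φ : x ∥ y ≃ σx ∥ y be a secured bijection corresponding to a configuration of CC_A ⊛ S (so x ∈ C(S), y ∈ C(A) and σx ∥ y ∈ C(CC_A)). The following are equivalent: (i) all maximal events of φ (in its induced order) are visible, i.e. project to the right-hand copy of A; (ii) every maximal event s of x is positive and σs ∈ y. Moreover, in this case, if σ is courteous then σx ⊆⁻ y. -/

import Mathlib

/-- An event structure presented as raw data: a set of events, a causality
relation and a consistency predicate on (finite) sets of events. -/
structure ES where
  Evt : Type
  le : Evt → Evt → Prop
  Con : Set (Set Evt)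

namespace ES

/-- Strict causality. -/
def lt (E : ES) (a b : E.Evt) : Prop := E.le a b ∧ a ≠ b

/-- The axioms of event structures: `le` is a partial order, causes `[e]` are
finite, consistency is a nonempty collection of finite sets, closed under
subsets, containing all singletons, and closed under adding causal
dependencies. -/
def IsES (E : ES) : Prop :=
  (∀ e, E.le e e) ∧
  (∀ a b c, E.le a b → E.le b c → E.le a c) ∧
  (∀ a b, E.le a b → E.le b a → a = b) ∧
  (∀ e, {e' | E.le e' e}.Finite) ∧
  E.Con.Nonempty ∧
  (∀ X ∈ E.Con, X.Finite) ∧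
  (∀ e, ({e} : Set E.Evt) ∈ E.Con) ∧
  (∀ X ∈ E.Con, ∀ Y, Y ⊆ X → Y ∈ E.Con) ∧
  (∀ X ∈ E.Con, ∀ e ∈ X, ∀ e', E.le e' e → insert e' X ∈ E.Con)

/-- A (finite) configuration: a finite, consistent and down-closed set of events. -/
def Config (E : ES) (x : Set E.Evt) : Prop :=
  x.Finite ∧ (∀ Y, Y ⊆ x → Y.Finite → Y ∈ E.Con) ∧
  ∀ e ∈ x, ∀ e', E.le e' e → e' ∈ x

/-- Immediate causality `e ⇢ e'`. -/
def imc (E : ES) (a b : E.Evt) : Prop :=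
  E.lt a b ∧ ∀ c, E.le a c → E.le c b → c = a ∨ c = b

/-- Simple parallel composition of event structures. -/
def par (E F : ES) : ES where
  Evt := E.Evt ⊕ F.Evt
  le := fun p q =>
    match p, q with
    | Sum.inl a, Sum.inl b => E.le a b
    | Sum.inr a, Sum.inr b => F.le a b
    | _, _ => False
  Con := {X | Sum.inl ⁻¹' X ∈ E.Con ∧ Sum.inr ⁻¹' X ∈ F.Con}

/-- Projection (hiding): restrict an event structure to a subset `V` of events. -/
def proj (E : ES) (V : Set E.Evt) : ES where
  Evt := ↥V
  le := fun a b => E.le a.val b.val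
  Con := {X | Subtype.val '' X ∈ E.Con}

end ES

/-- A (total) map of event structures: preserves configurations and is
injective on each configuration. -/
def IsMap (E F : ES) (f : E.Evt → F.Evt) : Prop :=
  (∀ x, E.Config x → F.Config (f '' x)) ∧ ∀ x, E.Config x → Set.InjOn f x
/-- An event structure with polarities (`true` = positive/Player,
`false` = negative/Opponent). -/
structure ESP extends ES where
  pol : Evt → Bool

namespace ESP

/-- The dual game: polarities reversed. -/
def dual (A : ESP) : ESP where
  toES := A.toES
  pol := fun a => !A.pol a

/-- Simple parallel composition of games. -/
def par (A B : ESP) : ESP where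
  toES := A.toES.par B.toES
  pol := Sum.elim A.pol B.pol

end ESP

/-- A pre-strategy on the game `A`: a polarity-preserving map of event
structures `σ : S → A`. -/
def IsPreStrategy (S A : ESP) (σ : S.Evt → A.Evt) : Prop :=
  IsMap S.toES A.toES σ ∧ ∀ s, A.pol (σ s) = S.pol s

/-- `polExt pol b x y` means `x ⊆ y` and all events of `y \ x` have polarity `b`;
so `polExt pol true x y` is `x ⊆⁺ y` and `polExt pol false x y` is `x ⊆⁻ y`. -/
def polExt {α : Type} (pol : α → Bool) (b : Bool) (x y : Set α) : Prop :=
  x ⊆ y ∧ ∀ a ∈ y, a ∉ x → pol a = b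

/-- The Scott order: `x ⊑ y` iff `x ⊇⁻ (x ∩ y) ⊆⁺ y`. -/
def scottLE {α : Type} (pol : α → Bool) (x y : Set α) : Prop :=
  polExt pol false (x ∩ y) x ∧ polExt pol true (x ∩ y) y

/-- Courtesy: immediate causal links other than `− ⇢ +` are sent to immediate
causal links of the game. -/
def Courteous (S A : ESP) (σ : S.Evt → A.Evt) : Prop :=
  ∀ s s', S.toES.imc s s' → (S.pol s, S.pol s') ≠ (false, true) →
    A.toES.imc (σ s) (σ s')

/-- Receptivity: every negative extension of `σ x` in the game is matched by a
unique extension of `x`. -/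
def Receptive (S A : ESP) (σ : S.Evt → A.Evt) : Prop :=
  ∀ x, S.toES.Config x → ∀ a, A.pol a = false → a ∉ σ '' x →
    A.toES.Config (insert a (σ '' x)) →
    ∃! s, s ∉ x ∧ S.toES.Config (insert s x) ∧ σ s = a
/-- The generating relation of copycat causality on `A^⊥ ∥ A`:
the causality of `A^⊥ ∥ A` together with the links from each negative
occurrence to the corresponding positive occurrence on the other side. -/
def ccGen (A : ESP) : (A.Evt ⊕ A.Evt) → (A.Evt ⊕ A.Evt) → Prop :=
  fun p q => (A.dual.par A).le p q ∨
    (∃ a, A.pol a = true ∧ p = Sum.inl a ∧ q = Sum.inr a) ∨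
    (∃ a, A.pol a = false ∧ p = Sum.inr a ∧ q = Sum.inl a)

/-- The copycat structure `CC_A` on the game `A`. -/
def CC (A : ESP) : ESP where
  Evt := A.Evt ⊕ A.Evt
  le := Relation.ReflTransGen (ccGen A)
  Con := {X | {e | ∃ e' ∈ X, Relation.ReflTransGen (ccGen A) e e'} ∈ (A.dual.par A).Con}
  pol := (A.dual.par A).pol
/-- The relation `◁` generating the order on the graph `G` of a bijection:
`p ◁ q` when both are in `G` and `p.1 <_S q.1` or `p.2 <_T q.2`. -/
def gRel (S T : ES) (G : Set (S.Evt × T.Evt)) :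
    (S.Evt × T.Evt) → (S.Evt × T.Evt) → Prop :=
  fun p q => p ∈ G ∧ q ∈ G ∧ (S.lt p.1 q.1 ∨ T.lt p.2 q.2)

/-- The graph `G` is secured: the reflexive-transitive closure of `◁` on `G`
is antisymmetric (hence a partial order). -/
def SecuredOn (S T : ES) (G : Set (S.Evt × T.Evt)) : Prop :=
  ∀ p q, Relation.ReflTransGen (gRel S T G) p q →
    Relation.ReflTransGen (gRel S T G) q p → p = q

/-- `G` is (the graph of) a secured bijection `φ : x ≃ σ x = τ y ≃ y` between
configurations `x ∈ C(S)` and `y ∈ C(T)`, an element of `SB(σ, τ)`. -/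
def IsSecBij (S T A : ES) (σ : S.Evt → A.Evt) (τ : T.Evt → A.Evt)
    (G : Set (S.Evt × T.Evt)) : Prop :=
  S.Config (Prod.fst '' G) ∧ T.Config (Prod.snd '' G) ∧
  (∀ p ∈ G, σ p.1 = τ p.2) ∧
  (∀ s ∈ Prod.fst '' G, ∀ t ∈ Prod.snd '' G, σ s = τ t → (s, t) ∈ G) ∧
  σ '' (Prod.fst '' G) = τ '' (Prod.snd '' G) ∧
  SecuredOn S T G

/-- `G` has a top (greatest) element for the induced order. -/
def IsPrime (S T : ES) (G : Set (S.Evt × T.Evt)) : Prop :=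
  ∃ p ∈ G, ∀ q ∈ G, Relation.ReflTransGen (gRel S T G) q p

/-- The interaction `S ∧ T` of `σ : S → A` and `τ : T → A`: events are the
prime secured bijections, causality is inclusion of graphs, and a finite set
of events is consistent when the union of their graphs is a secured bijection. -/
def Interaction (S T A : ES) (σ : S.Evt → A.Evt) (τ : T.Evt → A.Evt) : ES where
  Evt := {G : Set (S.Evt × T.Evt) // IsSecBij S T A σ τ G ∧ IsPrime S T G}
  le := fun G G' => G.val ⊆ G'.val
  Con := {X | X.Finite ∧ IsSecBij S T A σ τ (⋃ G ∈ X, G.val)}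
/-- The interaction `CC_A ⊛ S`: the pullback of `σ ∥ id_A : S ∥ A → A ∥ A`
and `ccc_A = id : CC_A → A ∥ A` (polarities ignored). -/
def ccInterES (A S : ESP) (σ : S.Evt → A.Evt) : ES :=
  Interaction (S.toES.par A.toES) (CC A).toES (A.toES.par A.toES)
    (Sum.map σ id) id

/-- The graph of the bijection `x ∥ y ≃ σ x ∥ y` determined by a pair of
configurations `(x, y) ∈ C(S) × C(A)` (the secured bijection `Ψ⁻¹(x, y)`). -/
def ccGraph (A S : ESP) (σ : S.Evt → A.Evt) (xS : Set S.Evt) (xA : Set A.Evt) :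
    Set ((S.Evt ⊕ A.Evt) × (A.Evt ⊕ A.Evt)) :=
  {p | p.1 ∈ Sum.inl '' xS ∪ Sum.inr '' xA ∧ p.2 = Sum.map σ id p.1}

/-- All maximal events of the graph `G` (for its induced order) are visible,
i.e. project to the right-hand copy of `A`. -/
def MaxVis (A S : ESP) (σ : S.Evt → A.Evt)
    (G : Set ((S.Evt ⊕ A.Evt) × (A.Evt ⊕ A.Evt))) : Prop :=
  ∀ p ∈ G, (∀ q ∈ G, Relation.ReflTransGen
      (gRel (S.toES.par A.toES) (CC A).toES G) p q → q = p) →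
    ∃ a : A.Evt, p.1 = Sum.inr a

section Helpers

variable (A S : ESP)

/-- Maps of event structures reflect causality on configurations. -/
lemma map_reflects_le (hS : S.toES.IsES)
    (σ : S.Evt → A.Evt) (hσ : IsPreStrategy S A σ)
    (x : Set S.Evt) (hx : S.toES.Config x)
    {s s' : S.Evt} (hs : s ∈ x) (hs' : s' ∈ x)
    (h : A.le (σ s) (σ s')) : S.le s s' := by
  obtain ⟨hrefl, htrans, -⟩ := hS
  set z : Set S.Evt := {u | u ∈ x ∧ S.le u s'} with hz
  have hzc : S.toES.Config z := by
    refine ⟨hx.1.subset (fun u hu => hu.1), ?_, ?_⟩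
    · intro Y hY hYf; exact hx.2.1 Y (fun u hu => (hY hu).1) hYf
    · intro e he e' he'; exact ⟨hx.2.2 e he.1 e' he', htrans _ _ _ he' he.2⟩
  have himg := hσ.1.1 z hzc
  have hσs' : σ s' ∈ σ '' z := ⟨s', ⟨hs', hrefl s'⟩, rfl⟩
  obtain ⟨u, hu, huv⟩ := himg.2.2 _ hσs' _ h
  have := hσ.1.2 x hx hu.1 hs huv
  rw [← this]; exact hu.2

/-- Key lemma: a copycat chain out of `inl (σ s)` for `s` maximal in `x`,
staying inside the configuration `σ x ∥ y`, either stays put or witnesses that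
`σ s` is positive and `σ s ∈ y`. -/
lemma cc_chain_from_max (hS : S.toES.IsES)
    (σ : S.Evt → A.Evt) (hσ : IsPreStrategy S A σ)
    (x : Set S.Evt) (y : Set A.Evt) (hx : S.toES.Config x)
    (hcc : (CC A).toES.Config (Sum.inl '' (σ '' x) ∪ Sum.inr '' y))
    {s : S.Evt} (hs : s ∈ x) (hmax : ∀ s' ∈ x, S.le s s' → s' = s)
    {c : A.Evt ⊕ A.Evt}
    (hrtc : Relation.ReflTransGen (ccGen A) (Sum.inl (σ s)) c)
    (hc : c ∈ Sum.inl '' (σ '' x) ∪ Sum.inr '' y) :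
    c = Sum.inl (σ s) ∨ (A.pol (σ s) = true ∧ σ s ∈ y) := by
  revert hc
  induction hrtc with
  | refl => intro _; exact Or.inl rfl
  | @tail b c hab hbc ih =>
    intro hc
    have hb : b ∈ Sum.inl '' (σ '' x) ∪ Sum.inr '' y :=
      hcc.2.2 c hc b (Relation.ReflTransGen.single hbc)
    rcases ih hb with hb' | hgoal
    · subst hb'
      rcases hbc with hpar | ⟨a, hpa, hpe, hqe⟩ | ⟨a, hpa, hpe, hqe⟩
      · cases c with
        | inl a' =>
          have ha' : a' ∈ σ '' x := by
            rcases hc with ⟨w, hw, heq⟩ | ⟨w, hw, heq⟩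
            · rw [Sum.inl.injEq] at heq; exact heq ▸ hw
            · exact absurd heq (by simp)
          obtain ⟨s'', hs'', hss⟩ := ha'
          have hle : A.le (σ s) (σ s'') := by rw [hss]; exact hpar
          have := hmax s'' hs'' (map_reflects_le A S hS σ hσ x hx hs hs'' hle)
          subst this
          exact Or.inl (by rw [hss])
        | inr a' => exact absurd hpar (by simp [ESP.par, ES.par, ESP.dual])
      · rw [Sum.inl.injEq] at hpe
        subst hqe
        have hmem : σ s ∈ y := by
          rcases hc with ⟨w, hw, heq⟩ | ⟨w, hw, heq⟩
          · exact absurd heq (by simp)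
          · rw [Sum.inr.injEq] at heq; rw [hpe]; exact heq ▸ hw
        exact Or.inr ⟨by rw [hpe]; exact hpa, hmem⟩
      · exact absurd hpe (by simp)
    · exact Or.inr hgoal

/-- Every nonempty finite set in a partially ordered event structure has a
minimal element below any given member. -/
lemma exists_minimal (hS : S.toES.IsES) :
    ∀ (n : ℕ) (M : Set S.Evt), M.Finite → M.ncard ≤ n → ∀ u ∈ M,
      ∃ v ∈ M, S.le v u ∧ ∀ w ∈ M, S.le w v → w = v := by
  obtain ⟨hrefl, htrans, hanti, -⟩ := hS
  intro n
  induction n with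
  | zero =>
    intro M hMf hcard u hu
    have : M = ∅ := Set.ncard_eq_zero hMf |>.mp (Nat.le_zero.mp hcard)
    exact absurd hu (by rw [this]; exact fun h => h)
  | succ n ih =>
    intro M hMf hcard u hu
    by_cases hm : ∀ w ∈ M, S.le w u → w = u
    · exact ⟨u, hu, hrefl u, hm⟩
    · push_neg at hm
      obtain ⟨w, hw, hwu, hwne⟩ := hm
      set M' : Set S.Evt := {z | z ∈ M ∧ S.le z w} with hM'
      have hsub : M' ⊆ M := fun z hz => hz.1
      have huM' : u ∉ M' := by
        intro h
        exact hwne (hanti _ _ hwu h.2)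
      have hcard' : M'.ncard ≤ n := by
        have : M' ⊂ M := ⟨hsub, fun h => huM' (h hu)⟩
        have := Set.ncard_lt_ncard this hMf
        omega
      obtain ⟨v, hv, hvw, hvmin⟩ := ih M' (hMf.subset hsub) hcard' w ⟨hw, hrefl w⟩
      refine ⟨v, hv.1, htrans _ _ _ hv.2 hwu, ?_⟩
      intro z hz hzv
      exact hvmin z ⟨hz, htrans _ _ _ hzv hv.2⟩ hzv

end Helpers
/-- for a secured bijection `φ : x ∥ y ≃ σ x ∥ y` corresponding
to a configuration of `CC_A ⊛ S`, all maximal events of `φ` are visible iff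
every maximal event `s` of `x` is positive with `σ s ∈ y`; and in this case,
if `σ` is courteous, `σ x ⊆⁻ y`. -/
theorem interaction_witness_maximal_events
    (A S : ESP) (hA : A.toES.IsES) (hS : S.toES.IsES)
    (σ : S.Evt → A.Evt) (hσ : IsPreStrategy S A σ)
    (x : Set S.Evt) (y : Set A.Evt)
    (hx : S.toES.Config x) (hy : A.toES.Config y)
    (hcc : (CC A).toES.Config (Sum.inl '' (σ '' x) ∪ Sum.inr '' y)) :
    (MaxVis A S σ (ccGraph A S σ x y) ↔
      ∀ s ∈ x, (∀ s' ∈ x, S.le s s' → s' = s) → S.pol s = true ∧ σ s ∈ y) ∧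
    (MaxVis A S σ (ccGraph A S σ x y) → Courteous S A σ →
      polExt A.pol false (σ '' x) y) := by
  have hr2set : ∀ r ∈ ccGraph A S σ x y,
      r.2 ∈ Sum.inl '' (σ '' x) ∪ Sum.inr '' y := by
    rintro ⟨r1, r2⟩ ⟨hr1, hr2⟩
    rcases hr1 with ⟨s', hs', heq⟩ | ⟨a, ha, heq⟩
    · subst heq
      rw [Sum.map_inl] at hr2
      subst hr2
      exact Or.inl ⟨σ s', ⟨s', hs', rfl⟩, rfl⟩
    · subst heq
      rw [Sum.map_inr, id] at hr2
      subst hr2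
      exact Or.inr ⟨a, ha, rfl⟩
  have hmp : MaxVis A S σ (ccGraph A S σ x y) →
      ∀ s ∈ x, (∀ s' ∈ x, S.le s s' → s' = s) → S.pol s = true ∧ σ s ∈ y := by
    intro hmv s hs hmax
    set p : (S.Evt ⊕ A.Evt) × (A.Evt ⊕ A.Evt) := (Sum.inl s, Sum.inl (σ s)) with hp
    have hpG : p ∈ ccGraph A S σ x y := ⟨Or.inl ⟨s, hs, rfl⟩, rfl⟩
    by_cases hmaxG : ∀ q ∈ ccGraph A S σ x y, Relation.ReflTransGen
        (gRel (S.toES.par A.toES) (CC A).toES (ccGraph A S σ x y)) p q → q = p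
    · obtain ⟨a, ha⟩ := hmv p hpG hmaxG
      exact absurd ha (by simp [hp])
    · push_neg at hmaxG
      obtain ⟨q, hqG, hrtc, hqne⟩ := hmaxG
      obtain ⟨r, hstep, -⟩ :=
        (Relation.ReflTransGen.cases_head hrtc).resolve_left (fun h => hqne h.symm)
      obtain ⟨-, hrG, hlt⟩ := hstep
      rcases hlt with hlt | hlt
      · exfalso
        obtain ⟨hr1, hr2⟩ := hrG
        rcases hr1 with ⟨s', hs', heq⟩ | ⟨a, ha, heq⟩
        · rw [← heq] at hlt
          have hle : S.le s s' := hlt.1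
          have hss : s' = s := hmax s' hs' hle
          subst hss
          exact hlt.2 rfl
        · rw [← heq] at hlt
          exact hlt.1
      · have hr2 := hr2set r hrG
        have hchain := cc_chain_from_max A S hS σ hσ x y hx hcc hs hmax hlt.1 hr2
        rcases hchain with h | h
        · exact absurd h.symm hlt.2
        · exact ⟨by rw [← hσ.2 s]; exact h.1, h.2⟩
  have hmpr : (∀ s ∈ x, (∀ s' ∈ x, S.le s s' → s' = s) →
      S.pol s = true ∧ σ s ∈ y) → MaxVis A S σ (ccGraph A S σ x y) := by
    intro hrhs p hpG hpmax
    obtain ⟨hp1, hp2⟩ := hpG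
    rcases hp1 with ⟨s, hs, heq⟩ | ⟨a, ha, heq⟩
    swap
    · exact ⟨a, heq.symm⟩
    exfalso
    have hp2' : p.2 = Sum.inl (σ s) := by rw [hp2, ← heq]; rfl
    by_cases hmax : ∀ s' ∈ x, S.le s s' → s' = s
    · obtain ⟨hpol, hmem⟩ := hrhs s hs hmax
      set q : (S.Evt ⊕ A.Evt) × (A.Evt ⊕ A.Evt) := (Sum.inr (σ s), Sum.inr (σ s)) with hq
      have hqG : q ∈ ccGraph A S σ x y := ⟨Or.inr ⟨σ s, hmem, rfl⟩, rfl⟩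
      have hApol : A.pol (σ s) = true := by rw [hσ.2 s]; exact hpol
      have hstep : gRel (S.toES.par A.toES) (CC A).toES (ccGraph A S σ x y) p q := by
        refine ⟨⟨Or.inl ⟨s, hs, heq⟩, hp2⟩, hqG, Or.inr ?_⟩
        rw [hp2']
        exact ⟨Relation.ReflTransGen.single (Or.inr (Or.inl ⟨σ s, hApol, rfl, rfl⟩)),
          by simp [hq]; exact Sum.inl_ne_inr⟩
      have heqp := hpmax q hqG (Relation.ReflTransGen.single hstep)
      have h2 : (Sum.inl s : S.Evt ⊕ A.Evt) = Sum.inr (σ s) := by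
        rw [heq, ← heqp]
      exact absurd h2 (by simp)
    · push_neg at hmax
      obtain ⟨s', hs', hle, hne⟩ := hmax
      set q : (S.Evt ⊕ A.Evt) × (A.Evt ⊕ A.Evt) := (Sum.inl s', Sum.inl (σ s')) with hq
      have hqG : q ∈ ccGraph A S σ x y := ⟨Or.inl ⟨s', hs', rfl⟩, rfl⟩
      have hstep : gRel (S.toES.par A.toES) (CC A).toES (ccGraph A S σ x y) p q := by
        refine ⟨⟨Or.inl ⟨s, hs, heq⟩, hp2⟩, hqG, Or.inl ?_⟩
        rw [← heq]
        refine ⟨hle, ?_⟩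
        intro h
        exact hne ((Sum.inl.inj h).symm)
      have heqp := hpmax q hqG (Relation.ReflTransGen.single hstep)
      have h2 : (Sum.inl s : S.Evt ⊕ A.Evt) = Sum.inl s' := by
        rw [heq, ← heqp]
      exact hne ((Sum.inl.inj h2).symm)
  refine ⟨⟨hmp, hmpr⟩, ?_⟩
  intro hmv hcourt
  have hrhs := hmp hmv
  have hneg : ∀ s ∈ x, S.pol s = false → σ s ∈ y := by
    intro s hs hpol
    have hApol : A.pol (σ s) = false := by rw [hσ.2 s]; exact hpol
    have hmem : (Sum.inr (σ s) : A.Evt ⊕ A.Evt) ∈ Sum.inl '' (σ '' x) ∪ Sum.inr '' y :=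
      hcc.2.2 (Sum.inl (σ s)) (Or.inl ⟨σ s, ⟨s, hs, rfl⟩, rfl⟩) _
        (Relation.ReflTransGen.single (Or.inr (Or.inr ⟨σ s, hApol, rfl, rfl⟩)))
    rcases hmem with ⟨w, hw, heq⟩ | ⟨w, hw, heq⟩
    · exact absurd heq (by simp)
    · rw [Sum.inr.injEq] at heq; exact heq ▸ hw
  have key : ∀ n, ∀ s ∈ x, ({t | t ∈ x ∧ S.toES.lt s t}).ncard ≤ n → σ s ∈ y := by
    intro n
    induction n with
    | zero =>
      intro s hs hcard
      have hfin : {t | t ∈ x ∧ S.toES.lt s t}.Finite := hx.1.subset fun t ht => ht.1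
      have hemp := Set.ncard_eq_zero hfin |>.mp (Nat.le_zero.mp hcard)
      have hmax : ∀ s' ∈ x, S.le s s' → s' = s := by
        intro s' hs' hle
        by_contra hne
        have hm : s' ∈ {t | t ∈ x ∧ S.toES.lt s t} := ⟨hs', hle, fun h => hne h.symm⟩
        rw [hemp] at hm; exact hm
      exact (hrhs s hs hmax).2
    | succ n ih =>
      intro s hs hcard
      by_cases hmax : ∀ s' ∈ x, S.le s s' → s' = s
      · exact (hrhs s hs hmax).2
      · cases hpol : S.pol s with
        | false => exact hneg s hs hpol
        | true =>
          push_neg at hmax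
          obtain ⟨t, ht, hlet, hnet⟩ := hmax
          set M : Set S.Evt := {u | u ∈ x ∧ S.toES.lt s u} with hM
          have hMfin : M.Finite := hx.1.subset fun u hu => hu.1
          have htM : t ∈ M := ⟨ht, hlet, fun h => hnet h.symm⟩
          obtain ⟨v, hv, hvt, hvmin⟩ := exists_minimal S hS M.ncard M hMfin le_rfl t htM
          have himc : S.toES.imc s v := by
            refine ⟨hv.2, ?_⟩
            intro c hsc hcv
            by_cases hc : c = s
            · exact Or.inl hc
            · have hcx : c ∈ x := hx.2.2 v hv.1 c hcv
              exact Or.inr (hvmin c ⟨hcx, hsc, fun h => hc h.symm⟩ hcv)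
          have hAle : A.le (σ s) (σ v) := (hcourt s v himc (by simp [hpol])).1.1
          have hvcard : ({u | u ∈ x ∧ S.toES.lt v u}).ncard ≤ n := by
            have hsub2 : {u | u ∈ x ∧ S.toES.lt v u} ⊆ M := by
              intro u hu
              refine ⟨hu.1, hS.2.1 _ _ _ hv.2.1 hu.2.1, ?_⟩
              rintro rfl
              exact hv.2.2 (hS.2.2.1 _ _ hv.2.1 hu.2.1)
            have hss : {u | u ∈ x ∧ S.toES.lt v u} ⊂ M :=
              ⟨hsub2, fun h => (h hv).2.2 rfl⟩
            have := Set.ncard_lt_ncard hss hMfin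
            omega
          exact hy.2.2 (σ v) (ih v hv.1 hvcard) (σ s) hAle
  constructor
  · rintro a ⟨s, hs, rfl⟩
    exact key ({t | t ∈ x ∧ S.toES.lt s t}).ncard s hs le_rfl
  · intro a ha hna
    by_contra hb
    have hApol : A.pol a = true := by revert hb; cases A.pol a <;> simp
    have hmem := hcc.2.2 (Sum.inr a) (Or.inr ⟨a, ha, rfl⟩) (Sum.inl a)
      (Relation.ReflTransGen.single (Or.inr (Or.inl ⟨a, hApol, rfl, rfl⟩)))
    rcases hmem with ⟨w, hw, heq⟩ | ⟨w, hw, heq⟩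
    · replace heq : w = a := Sum.inl.inj heq; exact hna (heq ▸ hw)
    · exact absurd heq (by simp)
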